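/- For γ ∈ ℝ, Re(s) > 1 and x ∈ ℝ∖{0}, the convolution of the kernel Q̂_s(y) = (1/2)|y|^s(Θ(iy²) − 1), where Θ(τ) = ∑_{n∈ℤ} e^{iπτn²}, against ψ_γ(x) = |x|^{iγ} over the multiplicative group ℝ* equals ζ̂(s − iγ) · ψ_γ(x), where ζ̂(s) = π^{-s/2} Γ(s/2) ζ(s) is the completed Riemann zeta function. -/

import Mathlib

open MeasureTheory Complex

open Real Set in
/-- Complex-valued version of `MeasureTheory.integral_comp_abs`. -/
lemma integral_comp_abs_cx {f : ℝ → ℂ} :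
    ∫ x, f |x| = 2 * ∫ x in Ioi (0 : ℝ), f x := by
  have eq : ∫ (x : ℝ) in Ioi 0, f |x| = ∫ (x : ℝ) in Ioi 0, f x := by
    refine setIntegral_congr_fun measurableSet_Ioi (fun _ hx => ?_)
    rw [abs_eq_self.mpr (le_of_lt (by exact hx))]
  by_cases hf : IntegrableOn (fun x => f |x|) (Ioi 0)
  · have int_Iic : IntegrableOn (fun x ↦ f |x|) (Iic 0) := by
      rw [← Measure.map_neg_eq_self (volume : Measure ℝ)]
      let m : MeasurableEmbedding fun x : ℝ => -x := (Homeomorph.neg ℝ).measurableEmbedding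
      rw [m.integrableOn_map_iff]
      simp_rw [Function.comp_def, abs_neg, neg_preimage, neg_Iic, neg_zero]
      exact Iff.mpr integrableOn_Ici_iff_integrableOn_Ioi hf
    calc
      _ = (∫ x in Iic 0, f |x|) + ∫ x in Ioi 0, f |x| := by
        rw [← setIntegral_union (Iic_disjoint_Ioi le_rfl) measurableSet_Ioi int_Iic hf,
          Iic_union_Ioi, Measure.restrict_univ]
      _ = 2 * ∫ x in Ioi 0, f x := by
        rw [two_mul, eq]
        congr! 1
        rw [← neg_zero, ← integral_comp_neg_Iic, neg_zero]
        refine setIntegral_congr_fun measurableSet_Iic (fun _ hx => ?_)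
        rw [abs_eq_neg_self.mpr (by exact hx)]
  · have : ¬ Integrable (fun x => f |x|) := by
      contrapose! hf
      exact hf.integrableOn
    rw [← eq, integral_undef hf, integral_undef this, mul_zero]

open Real Set in
/-- Mellin transform of the theta kernel gives the completed zeta function. -/
lemma mellin_theta_kernel {w : ℂ} (hw : 1 < w.re) :
    mellin (fun t : ℝ ↦ (((∑' n : ℤ, rexp (-π * t * (n : ℝ) ^ 2)) - 1 : ℝ) : ℂ) / 2) (w / 2) =
      Gammaℝ w * riemannZeta w := by
  have hF : ∀ t ∈ Ioi (0:ℝ), HasSum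
      (fun n : ℕ ↦ if (n : ℝ) = 0 then 0 else (1 : ℂ) * rexp (-π * (n : ℝ) ^ 2 * t))
      ((((∑' n : ℤ, rexp (-π * t * (n : ℝ) ^ 2)) - 1 : ℝ) : ℂ) / 2) := by
    intro t ht
    rw [mem_Ioi] at ht
    have hsum : Summable (fun n : ℤ ↦ rexp (-π * t * (n : ℝ) ^ 2)) := by
      refine ((HurwitzZeta.hasSum_int_evenKernel 0 ht).summable).congr fun n => ?_
      ring_nf
    have hS : HasSum (fun n : ℤ ↦ rexp (-π * t * (n : ℝ) ^ 2))
        (∑' n : ℤ, rexp (-π * t * (n : ℝ) ^ 2)) := hsum.hasSum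
    have hN2 : HasSum (fun n : ℕ ↦ rexp (-π * (n:ℝ)^2 * t))
        (((∑' n : ℤ, rexp (-π * t * (n : ℝ) ^ 2)) + 1)/2) := by
      convert hS.nat_add_neg.div_const 2 using 2 with n
      · push_cast
        rfl
      · norm_num
        ring
      · simp
    have hreal := hasSum_ite_sub_hasSum hN2 0
    have hval : (((∑' n : ℤ, rexp (-π * t * (n : ℝ) ^ 2)) + 1)/2 - 1
        = ((∑' n : ℤ, rexp (-π * t * (n : ℝ) ^ 2)) - 1)/2) := by ring
    simp only [Nat.cast_zero, zero_pow two_ne_zero, mul_zero, zero_mul, Real.exp_zero,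
      hval] at hreal
    have hC := hasSum_ofReal.mpr hreal
    convert hC using 2 with n
    · simp [Nat.cast_eq_zero, apply_ite (fun r : ℝ ↦ (r : ℂ))]
    · push_cast
      ring
  have key := hasSum_mellin_pi_mul_sq (a := fun _ : ℕ ↦ (1 : ℂ)) (r := fun n : ℕ ↦ (n : ℝ))
    (by positivity : (0:ℝ) < w.re) hF ?_
  · rw [← key.tsum_eq]
    rw [zeta_eq_tsum_one_div_nat_cpow hw, ← tsum_mul_left]
    congr 1 with n
    rw [Nat.abs_cast, ofReal_natCast, mul_one_div, mul_one]
  · simp only [norm_one]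
    convert (Real.summable_one_div_nat_rpow.mpr hw) using 2 with n
    rw [Nat.abs_cast]

/-- Convolution of the global GL₁ Hecke-Baxter kernel (1/2)|y|^s(Θ(iy²)−1) against
ψ_γ(x)=|x|^{iγ} equals the completed zeta value ζ̂(s−iγ) times ψ_γ(x). -/
theorem stmt_3 (s : ℂ) (hs : 1 < s.re) (γ : ℝ) (x : ℝ) (hx : x ≠ 0) :
    ∫ y : ℝ, (1 / 2 : ℂ) * ((|y| : ℝ) : ℂ) ^ s *
        ((((∑' n : ℤ, Real.exp (-Real.pi * y ^ 2 * (n : ℝ) ^ 2)) - 1 : ℝ)) : ℂ) *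
        ((|x / y| : ℝ) : ℂ) ^ (Complex.I * γ) / ((|y| : ℝ) : ℂ) =
      (Real.pi : ℂ) ^ (-(s - Complex.I * γ) / 2) * Complex.Gamma ((s - Complex.I * γ) / 2) *
        riemannZeta (s - Complex.I * γ) * ((|x| : ℝ) : ℂ) ^ (Complex.I * γ) := by
  have hw : 1 < (s - Complex.I * γ).re := by
    simpa [Complex.sub_re, Complex.mul_re] using hs
  set w := s - Complex.I * γ with hwdef
  rw [← Complex.Gammaℝ_def, ← mellin_theta_kernel hw]
  set H : ℝ → ℂ := fun u ↦ ((u : ℝ) : ℂ) ^ (w - 1) *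
      ((((∑' n : ℤ, Real.exp (-Real.pi * u ^ 2 * (n : ℝ) ^ 2)) - 1 : ℝ)) : ℂ) / 2 with hHdef
  have hstep1 : ∫ y : ℝ, (1 / 2 : ℂ) * ((|y| : ℝ) : ℂ) ^ s *
        ((((∑' n : ℤ, Real.exp (-Real.pi * y ^ 2 * (n : ℝ) ^ 2)) - 1 : ℝ)) : ℂ) *
        ((|x / y| : ℝ) : ℂ) ^ (Complex.I * γ) / ((|y| : ℝ) : ℂ)
      = ((|x| : ℝ) : ℂ) ^ (Complex.I * γ) * ∫ y : ℝ, H |y| := by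
    rw [← integral_const_mul]
    refine integral_congr_ae ?_
    have h0 : ∀ᵐ (y : ℝ), y ≠ 0 := by
      refine ae_iff.mpr ?_
      simp only [not_not, Set.setOf_eq_eq_singleton]
      exact measure_singleton 0
    filter_upwards [h0] with y hy
    have hay : (0:ℝ) < |y| := abs_pos.mpr hy
    have hy0 : ((|y| : ℝ) : ℂ) ≠ 0 := Complex.ofReal_ne_zero.mpr hay.ne'
    have e1 : ((|x / y| : ℝ) : ℂ) ^ (Complex.I * γ)
        = ((|x| : ℝ) : ℂ) ^ (Complex.I * γ) * (((|y| : ℝ) : ℂ) ^ (Complex.I * γ))⁻¹ := by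
      rw [abs_div, div_eq_mul_inv, Complex.ofReal_mul,
        Complex.mul_cpow_ofReal_nonneg (abs_nonneg x) (inv_nonneg.mpr (abs_nonneg y)),
        Complex.ofReal_inv, Complex.inv_cpow]
      rw [Complex.arg_ofReal_of_nonneg (abs_nonneg y)]
      exact (Real.pi_ne_zero).symm
    have e2 : ((|y| : ℝ) : ℂ) ^ (w - 1)
        = ((|y| : ℝ) : ℂ) ^ s * (((|y| : ℝ) : ℂ) ^ (Complex.I * γ))⁻¹
          * (((|y| : ℝ) : ℂ))⁻¹ := by
      rw [hwdef, Complex.cpow_sub _ _ hy0, Complex.cpow_sub _ _ hy0, Complex.cpow_one]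
      ring
    have e0 : (∑' n : ℤ, Real.exp (-Real.pi * |y| ^ 2 * (n:ℝ) ^ 2))
        = ∑' n : ℤ, Real.exp (-Real.pi * y ^ 2 * (n:ℝ) ^ 2) := by rw [_root_.sq_abs]
    simp only [hHdef]
    rw [e0, e1, e2]
    ring
  rw [hstep1, integral_comp_abs_cx]
  have hstep2 : (2 : ℂ) * ∫ u in Set.Ioi (0:ℝ), H u =
      mellin (fun t : ℝ ↦ (((∑' n : ℤ, Real.exp (-Real.pi * t * (n : ℝ) ^ 2)) - 1 : ℝ) : ℂ) / 2)
        (w / 2) := by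
    rw [mellin, ← MeasureTheory.integral_comp_rpow_Ioi_of_pos
      (g := fun t : ℝ ↦ ((t : ℝ) : ℂ) ^ (w / 2 - 1) •
        ((((∑' n : ℤ, Real.exp (-Real.pi * t * (n : ℝ) ^ 2)) - 1 : ℝ) : ℂ) / 2))
      (two_pos)]
    rw [← integral_const_mul]
    refine setIntegral_congr_fun measurableSet_Ioi (fun u hu => ?_)
    have hu0 : (0:ℝ) < u := hu
    have hcu : (u:ℂ) ≠ 0 := Complex.ofReal_ne_zero.mpr hu0.ne'
    have harg : Complex.arg u = 0 := Complex.arg_ofReal_of_nonneg hu0.le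
    have hr2 : u ^ (2:ℝ) = u ^ 2 := by
      rw [show (2:ℝ) = ((2:ℕ):ℝ) by norm_num, Real.rpow_natCast]
    have hpow : (((u ^ 2 : ℝ)) : ℂ) ^ (w/2 - 1) = (u:ℂ) ^ (w - 2) := by
      rw [Complex.ofReal_pow, ← Complex.cpow_nat_mul' (by rw [harg]; simpa using Real.pi_pos)
        (by rw [harg]; simp [Real.pi_pos.le]),
        show ((2:ℕ):ℂ) * (w/2 - 1) = w - 2 by push_cast; ring]
    have hsplit : (u:ℂ) ^ (w - 1) = (u:ℂ) * (u:ℂ) ^ (w - 2) := by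
      rw [show w - 1 = 1 + (w - 2) by ring, Complex.cpow_add _ _ hcu, Complex.cpow_one]
    rw [show (2:ℝ) - 1 = 1 by norm_num, Real.rpow_one, hr2, hpow]
    simp only [hHdef, smul_eq_mul, Complex.real_smul, Complex.ofReal_mul, Complex.ofReal_ofNat]
    rw [hsplit]
    ring
  rw [hstep2]
  ring
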